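/- Let f = (x³ − y³)(y³ − z³)(x³ − z³) ∈ ℂ[x,y,z] (the dual Hesse arrangement of 9 lines with exactly 12 ordinary triple points and no other singularities), let J_f = ⟨∂f/∂x, ∂f/∂y, ∂f/∂z⟩ be its Jacobian ideal, and let m = ⟨x, y, z⟩. Then the colon ideal (J_f : m) equals J_f; that is, J_f is saturated with respect to m, i.e. the curve f = 0 is a free plane curve (of degree 9, showing that the degree bound m ≤ 9 for free curves with only nodes, tacnodes and ordinary triple points is sharp). -/

import Mathlib

open MvPolynomial

set_option maxHeartbeats 1600000

noncomputable section

private lemma dh_key {R : Type*} [CommRing R] [IsDomain R]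
    {a1 a2 a3 s1 s2 s3 t1 t2 t3 P Q Rr yy c : R} {N : ℕ}
    (horth : a1*(s2*t3 - s3*t2) + a2*(s3*t1 - s1*t3) + a3*(s1*t2 - s2*t1) = 0)
    (hcert : P*(s2*t3 - s3*t2) + Q*(s3*t1 - s1*t3) + Rr*(s1*t2 - s2*t1) = c*yy^N)
    (hy : Prime yy) (hnd : ¬ yy ∣ (s2*t3 - s3*t2)) (hc : ∃ ci, c * ci = 1) :
    ∃ α β, a1 = α*s1 + β*t1 ∧ a2 = α*s2 + β*t2 ∧ a3 = α*s3 + β*t3 := by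
  obtain ⟨ci, hci⟩ := hc
  have hT1 : (P*(a2*t3 - a3*t2) + Q*(a3*t1 - a1*t3) + Rr*(a1*t2 - a2*t1))*(s2*t3 - s3*t2) = (a2*t3 - a3*t2)*(c*yy^N) := by
    linear_combination (a2*t3 - a3*t2)*hcert + (Rr*t2 - Q*t3)*horth
  have hT2 : (P*(a2*t3 - a3*t2) + Q*(a3*t1 - a1*t3) + Rr*(a1*t2 - a2*t1))*(s3*t1 - s1*t3) = (a3*t1 - a1*t3)*(c*yy^N) := by
    linear_combination (a3*t1 - a1*t3)*hcert + (P*t3 - Rr*t1)*horth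
  have hT3 : (P*(a2*t3 - a3*t2) + Q*(a3*t1 - a1*t3) + Rr*(a1*t2 - a2*t1))*(s1*t2 - s2*t1) = (a1*t2 - a2*t1)*(c*yy^N) := by
    linear_combination (a1*t2 - a2*t1)*hcert + (Q*t1 - P*t2)*horth
  have hT1' : (P*(s2*a3 - s3*a2) + Q*(s3*a1 - s1*a3) + Rr*(s1*a2 - s2*a1))*(s2*t3 - s3*t2) = (s2*a3 - s3*a2)*(c*yy^N) := by
    linear_combination (s2*a3 - s3*a2)*hcert + (Q*s3 - Rr*s2)*horth
  have hyNne : (yy:R)^N ≠ 0 := pow_ne_zero _ hy.ne_zero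
  obtain ⟨T0, hT0⟩ : yy^N ∣ (P*(a2*t3 - a3*t2) + Q*(a3*t1 - a1*t3) + Rr*(a1*t2 - a2*t1)) := by
    refine Prime.pow_dvd_of_dvd_mul_right hy N hnd ?_
    exact ⟨(a2*t3 - a3*t2)*c, by linear_combination hT1⟩
  obtain ⟨T0', hT0'⟩ : yy^N ∣ (P*(s2*a3 - s3*a2) + Q*(s3*a1 - s1*a3) + Rr*(s1*a2 - s2*a1)) := by
    refine Prime.pow_dvd_of_dvd_mul_right hy N hnd ?_
    exact ⟨(s2*a3 - s3*a2)*c, by linear_combination hT1'⟩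
  have hu1c : T0*(s2*t3 - s3*t2) = (a2*t3 - a3*t2)*c := by
    refine mul_left_cancel₀ hyNne ?_
    linear_combination hT1 - (s2*t3 - s3*t2)*hT0
  have hu2c : T0*(s3*t1 - s1*t3) = (a3*t1 - a1*t3)*c := by
    refine mul_left_cancel₀ hyNne ?_
    linear_combination hT2 - (s3*t1 - s1*t3)*hT0
  have hu3c : T0*(s1*t2 - s2*t1) = (a1*t2 - a2*t1)*c := by
    refine mul_left_cancel₀ hyNne ?_
    linear_combination hT3 - (s1*t2 - s2*t1)*hT0
  have hv1c : T0'*(s2*t3 - s3*t2) = (s2*a3 - s3*a2)*c := by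
    refine mul_left_cancel₀ hyNne ?_
    linear_combination hT1' - (s2*t3 - s3*t2)*hT0'
  have hws1 : (a2 - (ci*T0)*s2 - (ci*T0')*t2)*s3 - (a3 - (ci*T0)*s3 - (ci*T0')*t3)*s2 = 0 := by
    linear_combination ci*hv1c + (s2*a3 - s3*a2)*hci
  have hwt1 : (a2 - (ci*T0)*s2 - (ci*T0')*t2)*t3 - (a3 - (ci*T0)*s3 - (ci*T0')*t3)*t2 = 0 := by
    linear_combination (-ci)*hu1c + (-(a2*t3 - a3*t2))*hci
  have hwt2 : (a3 - (ci*T0)*s3 - (ci*T0')*t3)*t1 - (a1 - (ci*T0)*s1 - (ci*T0')*t1)*t3 = 0 := by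
    linear_combination (-ci)*hu2c + (-(a3*t1 - a1*t3))*hci
  have hwt3 : (a1 - (ci*T0)*s1 - (ci*T0')*t1)*t2 - (a2 - (ci*T0)*s2 - (ci*T0')*t2)*t1 = 0 := by
    linear_combination (-ci)*hu3c + (-(a1*t2 - a2*t1))*hci
  have hD1ne : (s2*t3 - s3*t2) ≠ 0 := fun h => hnd (h ▸ dvd_zero yy)
  have hw1 : (a1 - (ci*T0)*s1 - (ci*T0')*t1)*(s2*t3 - s3*t2) = 0 := by
    linear_combination (-t1)*hws1 + (-s2)*hwt2 + (-s3)*hwt3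
  have hw2 : (a2 - (ci*T0)*s2 - (ci*T0')*t2)*(s2*t3 - s3*t2) = 0 := by
    linear_combination (-t2)*hws1 + s2*hwt1
  have hw3 : (a3 - (ci*T0)*s3 - (ci*T0')*t3)*(s2*t3 - s3*t2) = 0 := by
    linear_combination (-t3)*hws1 + s3*hwt1
  refine ⟨ci*T0, ci*T0', ?_, ?_, ?_⟩
  · have h := (mul_eq_zero.mp hw1).resolve_right hD1ne
    linear_combination h
  · have h := (mul_eq_zero.mp hw2).resolve_right hD1ne
    linear_combination h
  · have h := (mul_eq_zero.mp hw3).resolve_right hD1ne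
    linear_combination h

private def dhphi : MvPolynomial (Fin 3) ℂ →ₐ[ℂ] MvPolynomial (Fin 3) ℂ :=
  aeval ![-(X 1) - 3 * X 2, X 1, X 2]

private lemma dhphi_X0 : dhphi (X 0) = -(X 1) - 3 * X 2 := by simp [dhphi]

private lemma dhphi_X1 : dhphi (X 1) = X 1 := by simp [dhphi]

private lemma dhphi_X2 : dhphi (X 2) = X 2 := by simp [dhphi]

private lemma dhphi_idem (p : MvPolynomial (Fin 3) ℂ) : dhphi (dhphi p) = dhphi p := by
  have h : dhphi.comp dhphi = dhphi := by
    apply MvPolynomial.algHom_ext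
    intro i
    fin_cases i
    · show dhphi (dhphi (X 0)) = dhphi (X 0)
      simp only [dhphi_X0, map_sub, map_neg, map_mul, map_ofNat, dhphi_X1, dhphi_X2]
    · show dhphi (dhphi (X 1)) = dhphi (X 1)
      simp only [dhphi_X1]
    · show dhphi (dhphi (X 2)) = dhphi (X 2)
      simp only [dhphi_X2]
  exact AlgHom.congr_fun h p

private lemma dh_dvd_sub_phi (p : MvPolynomial (Fin 3) ℂ) :
    (X 0 + X 1 + 3 * X 2 : MvPolynomial (Fin 3) ℂ) ∣ p - dhphi p := by
  induction p using MvPolynomial.induction_on with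
  | C a => simp [dhphi]
  | add p q hp hq =>
      have h : p + q - dhphi (p + q) = (p - dhphi p) + (q - dhphi q) := by
        rw [map_add]; ring
      rw [h]; exact dvd_add hp hq
  | mul_X p n hp =>
      have hXn : (X 0 + X 1 + 3 * X 2 : MvPolynomial (Fin 3) ℂ) ∣ (X n - dhphi (X n)) := by
        fin_cases n
        · show (X 0 + X 1 + 3 * X 2 : MvPolynomial (Fin 3) ℂ) ∣ (X 0 - dhphi (X 0))
          rw [dhphi_X0]; exact ⟨1, by ring⟩
        · show (X 0 + X 1 + 3 * X 2 : MvPolynomial (Fin 3) ℂ) ∣ (X 1 - dhphi (X 1))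
          rw [dhphi_X1]; simp
        · show (X 0 + X 1 + 3 * X 2 : MvPolynomial (Fin 3) ℂ) ∣ (X 2 - dhphi (X 2))
          rw [dhphi_X2]; simp
      have h : p * X n - dhphi (p * X n)
          = (p - dhphi p) * X n + dhphi p * (X n - dhphi (X n)) := by
        rw [map_mul]; ring
      rw [h]
      exact dvd_add (Dvd.dvd.mul_right hp _) (Dvd.dvd.mul_left hXn _)

private lemma dh_prime_X1 : Prime (X 1 : MvPolynomial (Fin 3) ℂ) := by
  refine (MulEquiv.prime_iff ((renameEquiv ℂ (Equiv.swap (0 : Fin 3) 1)).trans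
    (finSuccEquiv ℂ 2)).toMulEquiv).mp ?_
  have h : ((renameEquiv ℂ (Equiv.swap (0 : Fin 3) 1)).trans (finSuccEquiv ℂ 2)) (X 1)
      = Polynomial.X := by
    rw [AlgEquiv.trans_apply, renameEquiv_apply, rename_X, Equiv.swap_apply_right,
      finSuccEquiv_X_zero]
  show Prime ((((renameEquiv ℂ (Equiv.swap (0 : Fin 3) 1)).trans (finSuccEquiv ℂ 2))) (X 1))
  rw [h]
  exact Polynomial.prime_X

end

/-- The dual Hesse arrangement `(x³ - y³)(y³ - z³)(x³ - z³) = 0` of nine lines with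
twelve ordinary triple points is a free plane curve (of degree 9): its Jacobian
ideal is saturated with respect to the irrelevant ideal, i.e. `(J_f : m) = J_f`. -/
theorem dual_hesse_arrangement_is_free
    (f : MvPolynomial (Fin 3) ℂ)
    (hf : f = (X 0 ^ 3 - X 1 ^ 3) * (X 1 ^ 3 - X 2 ^ 3) * (X 0 ^ 3 - X 2 ^ 3))
    (Jf : Ideal (MvPolynomial (Fin 3) ℂ))
    (hJf : Jf = Ideal.span {pderiv 0 f, pderiv 1 f, pderiv 2 f})
    (m : Ideal (MvPolynomial (Fin 3) ℂ))
    (hm : m = Ideal.span {X 0, X 1, X 2}) :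
    Submodule.colon Jf m = Jf := by
  refine le_antisymm ?_ ?_
  swap
  · intro r hr
    rw [Submodule.mem_colon]
    intro p hp
    rw [smul_eq_mul]
    exact Ideal.mul_mem_right p Jf hr
  intro gq hg
  have hD1 : pderiv 0 f = ((6)*X 0 ^ 5*X 1 ^ 3 + (-6)*X 0 ^ 5*X 2 ^ 3 + (-3)*X 0 ^ 2*X 1 ^ 6 + (3)*X 0 ^ 2*X 2 ^ 6) := by
    subst hf
    simp only [map_sub, pderiv_mul, pderiv_pow, pderiv_X_self,
      pderiv_X_of_ne (show (1 : Fin 3) ≠ 0 by decide),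
      pderiv_X_of_ne (show (2 : Fin 3) ≠ 0 by decide),
      pderiv_X_of_ne (show (0 : Fin 3) ≠ 1 by decide),
      pderiv_X_of_ne (show (2 : Fin 3) ≠ 1 by decide),
      pderiv_X_of_ne (show (0 : Fin 3) ≠ 2 by decide),
      pderiv_X_of_ne (show (1 : Fin 3) ≠ 2 by decide)]
    push_cast
    ring
  have hD2 : pderiv 1 f = ((3)*X 0 ^ 6*X 1 ^ 2 + (-6)*X 0 ^ 3*X 1 ^ 5 + (6)*X 1 ^ 5*X 2 ^ 3 + (-3)*X 1 ^ 2*X 2 ^ 6) := by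
    subst hf
    simp only [map_sub, pderiv_mul, pderiv_pow, pderiv_X_self,
      pderiv_X_of_ne (show (1 : Fin 3) ≠ 0 by decide),
      pderiv_X_of_ne (show (2 : Fin 3) ≠ 0 by decide),
      pderiv_X_of_ne (show (0 : Fin 3) ≠ 1 by decide),
      pderiv_X_of_ne (show (2 : Fin 3) ≠ 1 by decide),
      pderiv_X_of_ne (show (0 : Fin 3) ≠ 2 by decide),
      pderiv_X_of_ne (show (1 : Fin 3) ≠ 2 by decide)]
    push_cast
    ring
  have hD3 : pderiv 2 f = ((-3)*X 0 ^ 6*X 2 ^ 2 + (6)*X 0 ^ 3*X 2 ^ 5 + (3)*X 1 ^ 6*X 2 ^ 2 + (-6)*X 1 ^ 3*X 2 ^ 5) := by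
    subst hf
    simp only [map_sub, pderiv_mul, pderiv_pow, pderiv_X_self,
      pderiv_X_of_ne (show (1 : Fin 3) ≠ 0 by decide),
      pderiv_X_of_ne (show (2 : Fin 3) ≠ 0 by decide),
      pderiv_X_of_ne (show (0 : Fin 3) ≠ 1 by decide),
      pderiv_X_of_ne (show (2 : Fin 3) ≠ 1 by decide),
      pderiv_X_of_ne (show (0 : Fin 3) ≠ 2 by decide),
      pderiv_X_of_ne (show (1 : Fin 3) ≠ 2 by decide)]
    push_cast
    ring
  have hmem : ∀ i : Fin 3, gq * X i ∈ Jf := by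
    intro i
    have hXi : (X i : MvPolynomial (Fin 3) ℂ) ∈ m := by
      rw [hm]
      fin_cases i
      · exact Ideal.subset_span (Set.mem_insert _ _)
      · exact Ideal.subset_span (Set.mem_insert_of_mem _ (Set.mem_insert _ _))
      · exact Ideal.subset_span (Set.mem_insert_of_mem _ (Set.mem_insert_of_mem _ rfl))
    have h := Submodule.mem_colon.mp hg (X i) hXi
    rwa [smul_eq_mul] at h
  have hlg : (X 0 + X 1 + 3 * X 2 : MvPolynomial (Fin 3) ℂ) * gq ∈ Jf := by
    have e : (X 0 + X 1 + 3 * X 2 : MvPolynomial (Fin 3) ℂ) * gq = gq * X 0 + gq * X 1 + 3 * (gq * X 2) := by ring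
    rw [e]
    exact add_mem (add_mem (hmem 0) (hmem 1)) (Ideal.mul_mem_left _ _ (hmem 2))
  rw [hJf] at hlg
  obtain ⟨A1, z1, hz1, e1⟩ := Submodule.mem_span_insert.mp hlg
  obtain ⟨A2, z2, hz2, e2⟩ := Submodule.mem_span_insert.mp hz1
  obtain ⟨A3, e3⟩ := Ideal.mem_span_singleton'.mp hz2
  have hA : (X 0 + X 1 + 3 * X 2 : MvPolynomial (Fin 3) ℂ) * gq = A1 * (((6)*X 0 ^ 5*X 1 ^ 3 + (-6)*X 0 ^ 5*X 2 ^ 3 + (-3)*X 0 ^ 2*X 1 ^ 6 + (3)*X 0 ^ 2*X 2 ^ 6)) + A2 * (((3)*X 0 ^ 6*X 1 ^ 2 + (-6)*X 0 ^ 3*X 1 ^ 5 + (6)*X 1 ^ 5*X 2 ^ 3 + (-3)*X 1 ^ 2*X 2 ^ 6)) + A3 * (((-3)*X 0 ^ 6*X 2 ^ 2 + (6)*X 0 ^ 3*X 2 ^ 5 + (3)*X 1 ^ 6*X 2 ^ 2 + (-6)*X 1 ^ 3*X 2 ^ 5)) := by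
    rw [e1, e2, ← e3, hD1, hD2, hD3]
    simp only [smul_eq_mul]
    ring
  have hb1 : dhphi (((6)*X 0 ^ 5*X 1 ^ 3 + (-6)*X 0 ^ 5*X 2 ^ 3 + (-3)*X 0 ^ 2*X 1 ^ 6 + (3)*X 0 ^ 2*X 2 ^ 6)) = (((-9)*X 1 ^ 8 + (-108)*X 1 ^ 7*X 2 + (-567)*X 1 ^ 6*X 2 ^ 2 + (-1614)*X 1 ^ 5*X 2 ^ 3 + (-2340)*X 1 ^ 4*X 2 ^ 4 + (-918)*X 1 ^ 3*X 2 ^ 5 + (1623)*X 1 ^ 2*X 2 ^ 6 + (2448)*X 1*X 2 ^ 7 + (1485)*X 2 ^ 8)) := by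
    simp only [map_add, map_sub, map_mul, map_pow, map_neg, map_ofNat, map_one,
      dhphi_X0, dhphi_X1, dhphi_X2]
    ring
  have hb2 : dhphi (((3)*X 0 ^ 6*X 1 ^ 2 + (-6)*X 0 ^ 3*X 1 ^ 5 + (6)*X 1 ^ 5*X 2 ^ 3 + (-3)*X 1 ^ 2*X 2 ^ 6)) = (((9)*X 1 ^ 8 + (108)*X 1 ^ 7*X 2 + (567)*X 1 ^ 6*X 2 ^ 2 + (1788)*X 1 ^ 5*X 2 ^ 3 + (3645)*X 1 ^ 4*X 2 ^ 4 + (4374)*X 1 ^ 3*X 2 ^ 5 + (2184)*X 1 ^ 2*X 2 ^ 6)) := by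
    simp only [map_add, map_sub, map_mul, map_pow, map_neg, map_ofNat, map_one,
      dhphi_X0, dhphi_X1, dhphi_X2]
    ring
  have hb3 : dhphi (((-3)*X 0 ^ 6*X 2 ^ 2 + (6)*X 0 ^ 3*X 2 ^ 5 + (3)*X 1 ^ 6*X 2 ^ 2 + (-6)*X 1 ^ 3*X 2 ^ 5)) = (((-54)*X 1 ^ 5*X 2 ^ 3 + (-405)*X 1 ^ 4*X 2 ^ 4 + (-1632)*X 1 ^ 3*X 2 ^ 5 + (-3699)*X 1 ^ 2*X 2 ^ 6 + (-4536)*X 1*X 2 ^ 7 + (-2349)*X 2 ^ 8)) := by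
    simp only [map_add, map_sub, map_mul, map_pow, map_neg, map_ofNat, map_one,
      dhphi_X0, dhphi_X1, dhphi_X2]
    ring
  have hphil : dhphi ((X 0 + X 1 + 3 * X 2 : MvPolynomial (Fin 3) ℂ)) = 0 := by
    simp only [map_add, map_mul, map_ofNat, dhphi_X0, dhphi_X1, dhphi_X2]
    ring
  have horth0 : dhphi A1 * (((-9)*X 1 ^ 8 + (-108)*X 1 ^ 7*X 2 + (-567)*X 1 ^ 6*X 2 ^ 2 + (-1614)*X 1 ^ 5*X 2 ^ 3 + (-2340)*X 1 ^ 4*X 2 ^ 4 + (-918)*X 1 ^ 3*X 2 ^ 5 + (1623)*X 1 ^ 2*X 2 ^ 6 + (2448)*X 1*X 2 ^ 7 + (1485)*X 2 ^ 8)) + dhphi A2 * (((9)*X 1 ^ 8 + (108)*X 1 ^ 7*X 2 + (567)*X 1 ^ 6*X 2 ^ 2 + (1788)*X 1 ^ 5*X 2 ^ 3 + (3645)*X 1 ^ 4*X 2 ^ 4 + (4374)*X 1 ^ 3*X 2 ^ 5 + (2184)*X 1 ^ 2*X 2 ^ 6)) + dhphi A3 * (((-54)*X 1 ^ 5*X 2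 ^ 3 + (-405)*X 1 ^ 4*X 2 ^ 4 + (-1632)*X 1 ^ 3*X 2 ^ 5 + (-3699)*X 1 ^ 2*X 2 ^ 6 + (-4536)*X 1*X 2 ^ 7 + (-2349)*X 2 ^ 8)) = 0 := by
    have h := congrArg dhphi hA
    rw [map_mul, hphil, zero_mul, map_add, map_add, map_mul, map_mul, map_mul,
      hb1, hb2, hb3] at h
    exact h.symm
  have horth : dhphi A1 * (((-3)*X 1 ^ 2*X 2 ^ 2 + (-18)*X 1*X 2 ^ 3 + (-27)*X 2 ^ 4) * ((-18)*X 1 ^ 2*X 2 ^ 2 + (-54)*X 1*X 2 ^ 3 + (-55)*X 2 ^ 4) - ((-3)*X 1 ^ 4 + (-18)*X 1 ^ 3*X 2 + (-27)*X 1 ^ 2*X 2 ^ 2) * ((-3)*X 1 ^ 4 + (-18)*X 1 ^ 3*X 2 + (-54)*X 1 ^ 2*X 2 ^ 2 + (-52)*X 1*X 2 ^ 3))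
      + dhphi A2 * (((-3)*X 1 ^ 4 + (-18)*X 1 ^ 3*X 2 + (-27)*X 1 ^ 2*X 2 ^ 2) * ((-3)*X 1 ^ 4 + (-18)*X 1 ^ 3*X 2 + (-54)*X 1 ^ 2*X 2 ^ 2 + (-110)*X 1*X 2 ^ 3 + (-87)*X 2 ^ 4) - ((-3)*X 1 ^ 2*X 2 ^ 2) * ((-18)*X 1 ^ 2*X 2 ^ 2 + (-54)*X 1*X 2 ^ 3 + (-55)*X 2 ^ 4))
      + dhphi A3 * (((-3)*X 1 ^ 2*X 2 ^ 2) * ((-3)*X 1 ^ 4 + (-18)*X 1 ^ 3*X 2 + (-54)*X 1 ^ 2*X 2 ^ 2 + (-52)*X 1*X 2 ^ 3) - ((-3)*X 1 ^ 2*X 2 ^ 2 + (-18)*X 1*X 2 ^ 3 + (-27)*X 2 ^ 4) * ((-3)*X 1 ^ 4 + (-18)*X 1 ^ 3*X 2 + (-54)*X 1 ^ 2*X 2 ^ 2 + (-110)*X 1*X 2 ^ 3 + (-87)*X 2 ^ 4)) = 0 := by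
    linear_combination horth0
  have hcert : (((-136447861)*X 1 ^ 3 + (417386238)*X 1 ^ 2*X 2 + (216001809)*X 1*X 2 ^ 2 + (375830604)*X 2 ^ 3)) * (((-3)*X 1 ^ 2*X 2 ^ 2 + (-18)*X 1*X 2 ^ 3 + (-27)*X 2 ^ 4) * ((-18)*X 1 ^ 2*X 2 ^ 2 + (-54)*X 1*X 2 ^ 3 + (-55)*X 2 ^ 4) - ((-3)*X 1 ^ 4 + (-18)*X 1 ^ 3*X 2 + (-27)*X 1 ^ 2*X 2 ^ 2) * ((-3)*X 1 ^ 4 + (-18)*X 1 ^ 3*X 2 + (-54)*X 1 ^ 2*X 2 ^ 2 + (-52)*X 1*X 2 ^ 3))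
      + (((-107464361)*X 1 ^ 3 + (69584238)*X 1 ^ 2*X 2 + (2563665309)*X 1*X 2 ^ 2 + (4952337084)*X 2 ^ 3)) * (((-3)*X 1 ^ 4 + (-18)*X 1 ^ 3*X 2 + (-27)*X 1 ^ 2*X 2 ^ 2) * ((-3)*X 1 ^ 4 + (-18)*X 1 ^ 3*X 2 + (-54)*X 1 ^ 2*X 2 ^ 2 + (-110)*X 1*X 2 ^ 3 + (-87)*X 2 ^ 4) - ((-3)*X 1 ^ 2*X 2 ^ 2) * ((-18)*X 1 ^ 2*X 2 ^ 2 + (-54)*X 1*X 2 ^ 3 + (-55)*X 2 ^ 4))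
      + (((2326167639)*X 1 ^ 3 + (4844919238)*X 1 ^ 2*X 2 + (69420753)*X 1*X 2 ^ 2 + (237594060)*X 2 ^ 3)) * (((-3)*X 1 ^ 2*X 2 ^ 2) * ((-3)*X 1 ^ 4 + (-18)*X 1 ^ 3*X 2 + (-54)*X 1 ^ 2*X 2 ^ 2 + (-52)*X 1*X 2 ^ 3) - ((-3)*X 1 ^ 2*X 2 ^ 2 + (-18)*X 1*X 2 ^ 3 + (-27)*X 2 ^ 4) * ((-3)*X 1 ^ 4 + (-18)*X 1 ^ 3*X 2 + (-54)*X 1 ^ 2*X 2 ^ 2 + (-110)*X 1*X 2 ^ 3 + (-87)*X 2 ^ 4))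
      = (260851500 : MvPolynomial (Fin 3) ℂ) * (X 1) ^ 11 := by
    ring
  have hnd : ¬ (X 1 : MvPolynomial (Fin 3) ℂ) ∣ (((-3)*X 1 ^ 2*X 2 ^ 2 + (-18)*X 1*X 2 ^ 3 + (-27)*X 2 ^ 4) * ((-18)*X 1 ^ 2*X 2 ^ 2 + (-54)*X 1*X 2 ^ 3 + (-55)*X 2 ^ 4) - ((-3)*X 1 ^ 4 + (-18)*X 1 ^ 3*X 2 + (-27)*X 1 ^ 2*X 2 ^ 2) * ((-3)*X 1 ^ 4 + (-18)*X 1 ^ 3*X 2 + (-54)*X 1 ^ 2*X 2 ^ 2 + (-52)*X 1*X 2 ^ 3)) := by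
    intro hdvd
    obtain ⟨q, hq⟩ := hdvd
    have hq' : (((-9)*X 1 ^ 8 + (-108)*X 1 ^ 7*X 2 + (-567)*X 1 ^ 6*X 2 ^ 2 + (-1614)*X 1 ^ 5*X 2 ^ 3 + (-2340)*X 1 ^ 4*X 2 ^ 4 + (-918)*X 1 ^ 3*X 2 ^ 5 + (1623)*X 1 ^ 2*X 2 ^ 6 + (2448)*X 1*X 2 ^ 7 + (1485)*X 2 ^ 8)) = X 1 * q := by linear_combination hq
    have hev := congrArg (eval (![0, 0, 1] : Fin 3 → ℂ)) hq'
    simp [eval_X] at hev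
  have hc : ∃ ci, (260851500 : MvPolynomial (Fin 3) ℂ) * ci = 1 := by
    refine ⟨C ((260851500 : ℂ)⁻¹), ?_⟩
    rw [← map_ofNat (C : ℂ →+* MvPolynomial (Fin 3) ℂ) 260851500, ← C_mul]
    norm_num
  obtain ⟨α, β, hA1, hA2, hA3⟩ := dh_key horth hcert dh_prime_X1 hnd hc
  have hA1' : dhphi A1 = dhphi α * (((-3)*X 1 ^ 2*X 2 ^ 2)) + dhphi β * (((-3)*X 1 ^ 4 + (-18)*X 1 ^ 3*X 2 + (-54)*X 1 ^ 2*X 2 ^ 2 + (-110)*X 1*X 2 ^ 3 + (-87)*X 2 ^ 4)) := by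
    conv_lhs => rw [← dhphi_idem A1]
    rw [hA1]
    simp only [map_add, map_mul, map_pow, map_neg, map_ofNat, map_one,
      dhphi_idem, dhphi_X1, dhphi_X2]
    try ring
  have hA2' : dhphi A2 = dhphi α * (((-3)*X 1 ^ 2*X 2 ^ 2 + (-18)*X 1*X 2 ^ 3 + (-27)*X 2 ^ 4)) + dhphi β * (((-3)*X 1 ^ 4 + (-18)*X 1 ^ 3*X 2 + (-54)*X 1 ^ 2*X 2 ^ 2 + (-52)*X 1*X 2 ^ 3)) := by
    conv_lhs => rw [← dhphi_idem A2]
    rw [hA2]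
    simp only [map_add, map_mul, map_pow, map_neg, map_ofNat, map_one,
      dhphi_idem, dhphi_X1, dhphi_X2]
    try ring
  have hA3' : dhphi A3 = dhphi α * (((-3)*X 1 ^ 4 + (-18)*X 1 ^ 3*X 2 + (-27)*X 1 ^ 2*X 2 ^ 2)) + dhphi β * (((-18)*X 1 ^ 2*X 2 ^ 2 + (-54)*X 1*X 2 ^ 3 + (-55)*X 2 ^ 4)) := by
    conv_lhs => rw [← dhphi_idem A3]
    rw [hA3]
    simp only [map_add, map_mul, map_pow, map_neg, map_ofNat, map_one,
      dhphi_idem, dhphi_X1, dhphi_X2]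
    try ring
  obtain ⟨B1, hB1⟩ : (X 0 + X 1 + 3 * X 2 : MvPolynomial (Fin 3) ℂ) ∣ (A1 - dhphi α * (((-3)*X 1 ^ 2*X 2 ^ 2)) - dhphi β * (((-1)*X 0 ^ 4 + (2)*X 0*X 1 ^ 3 + (2)*X 0*X 2 ^ 3))) := by
    have h := dh_dvd_sub_phi (A1 - dhphi α * (((-3)*X 1 ^ 2*X 2 ^ 2)) - dhphi β * (((-1)*X 0 ^ 4 + (2)*X 0*X 1 ^ 3 + (2)*X 0*X 2 ^ 3)))
    have hz : dhphi (A1 - dhphi α * (((-3)*X 1 ^ 2*X 2 ^ 2)) - dhphi β * (((-1)*X 0 ^ 4 + (2)*X 0*X 1 ^ 3 + (2)*X 0*X 2 ^ 3))) = 0 := by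
      simp only [map_sub, map_add, map_mul, map_pow, map_neg, map_ofNat, map_one,
        dhphi_idem, dhphi_X0, dhphi_X1, dhphi_X2]
      linear_combination hA1'
    rwa [hz, sub_zero] at h
  obtain ⟨B2, hB2⟩ : (X 0 + X 1 + 3 * X 2 : MvPolynomial (Fin 3) ℂ) ∣ (A2 - dhphi α * (((-3)*X 0 ^ 2*X 2 ^ 2)) - dhphi β * (((2)*X 0 ^ 3*X 1 + (-1)*X 1 ^ 4 + (2)*X 1*X 2 ^ 3))) := by
    have h := dh_dvd_sub_phi (A2 - dhphi α * (((-3)*X 0 ^ 2*X 2 ^ 2)) - dhphi β * (((2)*X 0 ^ 3*X 1 + (-1)*X 1 ^ 4 + (2)*X 1*X 2 ^ 3)))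
    have hz : dhphi (A2 - dhphi α * (((-3)*X 0 ^ 2*X 2 ^ 2)) - dhphi β * (((2)*X 0 ^ 3*X 1 + (-1)*X 1 ^ 4 + (2)*X 1*X 2 ^ 3))) = 0 := by
      simp only [map_sub, map_add, map_mul, map_pow, map_neg, map_ofNat, map_one,
        dhphi_idem, dhphi_X0, dhphi_X1, dhphi_X2]
      linear_combination hA2'
    rwa [hz, sub_zero] at h
  obtain ⟨B3, hB3⟩ : (X 0 + X 1 + 3 * X 2 : MvPolynomial (Fin 3) ℂ) ∣ (A3 - dhphi α * (((-3)*X 0 ^ 2*X 1 ^ 2)) - dhphi β * (((2)*X 0 ^ 3*X 2 + (2)*X 1 ^ 3*X 2 + (-1)*X 2 ^ 4))) := by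
    have h := dh_dvd_sub_phi (A3 - dhphi α * (((-3)*X 0 ^ 2*X 1 ^ 2)) - dhphi β * (((2)*X 0 ^ 3*X 2 + (2)*X 1 ^ 3*X 2 + (-1)*X 2 ^ 4)))
    have hz : dhphi (A3 - dhphi α * (((-3)*X 0 ^ 2*X 1 ^ 2)) - dhphi β * (((2)*X 0 ^ 3*X 2 + (2)*X 1 ^ 3*X 2 + (-1)*X 2 ^ 4))) = 0 := by
      simp only [map_sub, map_add, map_mul, map_pow, map_neg, map_ofNat, map_one,
        dhphi_idem, dhphi_X0, dhphi_X1, dhphi_X2]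
      linear_combination hA3'
    rwa [hz, sub_zero] at h
  have hlne : (X 0 + X 1 + 3 * X 2 : MvPolynomial (Fin 3) ℂ) ≠ 0 := by
    intro h
    have hev := congrArg (eval (![1, 0, 0] : Fin 3 → ℂ)) h
    simp [eval_X] at hev
  have hfin : (X 0 + X 1 + 3 * X 2 : MvPolynomial (Fin 3) ℂ) * (gq - (B1 * (((6)*X 0 ^ 5*X 1 ^ 3 + (-6)*X 0 ^ 5*X 2 ^ 3 + (-3)*X 0 ^ 2*X 1 ^ 6 + (3)*X 0 ^ 2*X 2 ^ 6)) + B2 * (((3)*X 0 ^ 6*X 1 ^ 2 + (-6)*X 0 ^ 3*X 1 ^ 5 + (6)*X 1 ^ 5*X 2 ^ 3 + (-3)*X 1 ^ 2*X 2 ^ 6)) + B3 * (((-3)*X 0 ^ 6*X 2 ^ 2 + (6)*X 0 ^ 3*X 2 ^ 5 + (3)*X 1 ^ 6*X 2 ^ 2 + (-6)*X 1 ^ 3*X 2 ^ 5)))) = 0 := by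
    linear_combination hA + (((6)*X 0 ^ 5*X 1 ^ 3 + (-6)*X 0 ^ 5*X 2 ^ 3 + (-3)*X 0 ^ 2*X 1 ^ 6 + (3)*X 0 ^ 2*X 2 ^ 6)) * hB1 + (((3)*X 0 ^ 6*X 1 ^ 2 + (-6)*X 0 ^ 3*X 1 ^ 5 + (6)*X 1 ^ 5*X 2 ^ 3 + (-3)*X 1 ^ 2*X 2 ^ 6)) * hB2 + (((-3)*X 0 ^ 6*X 2 ^ 2 + (6)*X 0 ^ 3*X 2 ^ 5 + (3)*X 1 ^ 6*X 2 ^ 2 + (-6)*X 1 ^ 3*X 2 ^ 5)) * hB3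
  have hgq : gq = B1 * (((6)*X 0 ^ 5*X 1 ^ 3 + (-6)*X 0 ^ 5*X 2 ^ 3 + (-3)*X 0 ^ 2*X 1 ^ 6 + (3)*X 0 ^ 2*X 2 ^ 6)) + B2 * (((3)*X 0 ^ 6*X 1 ^ 2 + (-6)*X 0 ^ 3*X 1 ^ 5 + (6)*X 1 ^ 5*X 2 ^ 3 + (-3)*X 1 ^ 2*X 2 ^ 6)) + B3 * (((-3)*X 0 ^ 6*X 2 ^ 2 + (6)*X 0 ^ 3*X 2 ^ 5 + (3)*X 1 ^ 6*X 2 ^ 2 + (-6)*X 1 ^ 3*X 2 ^ 5)) := by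
    have h := (mul_eq_zero.mp hfin).resolve_left hlne
    linear_combination h
  rw [hJf, hgq, ← hD1, ← hD2, ← hD3]
  refine add_mem (add_mem ?_ ?_) ?_
  · exact Ideal.mul_mem_left _ _ (Ideal.subset_span (Set.mem_insert _ _))
  · exact Ideal.mul_mem_left _ _
      (Ideal.subset_span (Set.mem_insert_of_mem _ (Set.mem_insert _ _)))
  · exact Ideal.mul_mem_left _ _
      (Ideal.subset_span (Set.mem_insert_of_mem _ (Set.mem_insert_of_mem _ rfl)))
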